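/- arXiv:1809.08619 — 2 statements merged into one kernel-verified Lean document; each statement's English description precedes it below -/
import Mathlib

section
/- Let A be a 2×2 real matrix with |det A| = 1, and identify ℙ(ℝ²) with the circle 𝕊¹ = ℝ mod π via θ ↦ span(e^{iθ}), so that A induces a map θ ↦ A(θ) on 𝕊¹. Then there exists θ₀ ∈ 𝕊¹ such that for every ε > 0 and all θ₁, θ₂ ∈ 𝕊¹ with dist(θ₁,θ₀) ≥ ε and dist(θ₂,θ₀) ≥ ε (distance in ℝ mod π), one has dist(A(θ₁), A(θ₂)) ≤ 2π³/(‖A‖² ε²), where ‖A‖ is the operator norm of A on Euclidean ℝ². -/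
set_option maxHeartbeats 1000000


open MeasureTheory Filter
open scoped ENNReal

/-- The operator norm of a real `d × d` matrix acting on Euclidean space. -/
noncomputable def opNorm {d : ℕ} (M : Matrix (Fin d) (Fin d) ℝ) : ℝ :=
  ‖LinearMap.toContinuousLinearMap (Matrix.toEuclideanLin M)‖

/-- The unit vector `e^{iθ} = (cos θ, sin θ)` in `ℝ²`. -/
noncomputable def uvec (θ : ℝ) : Fin 2 → ℝ := ![Real.cos θ, Real.sin θ]

/-- The Euclidean norm of a vector in `ℝ²`. -/
noncomputable def enorm2 (v : Fin 2 → ℝ) : ℝ := Real.sqrt (v 0 ^ 2 + v 1 ^ 2)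

open Real

section Aux

lemma circ_coe_sub (x y : ℝ) :
    (x : AddCircle π) - (y : AddCircle π) = ((x - y : ℝ) : AddCircle π) := by
  norm_cast

lemma circ_dist_le (x y : ℝ) : dist (x : AddCircle Real.pi) (y : AddCircle Real.pi) ≤ π / 2 := by
  have := AddCircle.norm_le_half_period (p := π)
    (x := ((x - y : ℝ) : AddCircle π)) Real.pi_ne_zero
  rw [dist_eq_norm, circ_coe_sub]
  rwa [abs_of_pos Real.pi_pos] at this

lemma sin_circ_dist (x y : ℝ) :
    Real.sin (dist (x : AddCircle Real.pi) (y : AddCircle Real.pi)) = |Real.sin (x - y)| := by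
  rw [dist_eq_norm, circ_coe_sub, AddCircle.norm_eq]
  set k : ℤ := round (π⁻¹ * (x - y)) with hk
  set t : ℝ := x - y - k * π with ht
  have h1 : |Real.sin t| = |Real.sin (x - y)| := by
    rw [ht, Real.sin_sub_int_mul_pi, abs_mul]
    have : |((-1 : ℝ)) ^ k| = 1 := by
      rcases k.even_or_odd with h | h
      · rw [h.neg_one_zpow]; norm_num
      · rw [h.neg_one_zpow]; norm_num
    rw [this, one_mul]
  have hb : |t| ≤ π / 2 := by
    have := AddCircle.norm_le_half_period (p := π)
      (x := ((x - y : ℝ) : AddCircle π)) Real.pi_ne_zero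
    rw [AddCircle.norm_eq, abs_of_pos Real.pi_pos] at this
    exact this
  rw [← h1]
  rcases abs_cases t with ⟨he, hpos⟩ | ⟨he, hneg⟩
  · rw [he, abs_of_nonneg]
    apply Real.sin_nonneg_of_nonneg_of_le_pi hpos
    rw [he] at hb; linarith [Real.pi_pos]
  · rw [he, Real.sin_neg, abs_of_nonpos]
    apply Real.sin_nonpos_of_nonpos_of_neg_pi_le hneg.le
    rw [he] at hb; linarith [Real.pi_pos]

/-- Jordan-type inequality on the circle `ℝ mod π`. -/
lemma jordan_circ (x y : ℝ) :
    2 / π * dist (x : AddCircle Real.pi) (y : AddCircle Real.pi) ≤ |Real.sin (x - y)| := by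
  rw [← sin_circ_dist]
  exact Real.mul_le_sin dist_nonneg (circ_dist_le x y)

/-- Phase existence: any (q1,q2) equals (q cos 2ψ, q sin 2ψ) with q = √(q1²+q2²). -/
lemma phase_exists (q1 q2 : ℝ) :
    ∃ ψ : ℝ, q1 = Real.sqrt (q1 ^ 2 + q2 ^ 2) * Real.cos (2 * ψ) ∧
             q2 = Real.sqrt (q1 ^ 2 + q2 ^ 2) * Real.sin (2 * ψ) := by
  by_cases hz : q1 = 0 ∧ q2 = 0
  · exact ⟨0, by simp [hz.1, hz.2]⟩
  · set z : ℂ := ⟨q1, q2⟩ with hzdef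
    have hz0 : z ≠ 0 := by
      intro h
      apply hz
      constructor
      · simpa using congrArg Complex.re h
      · simpa using congrArg Complex.im h
    have habs : ‖z‖ = Real.sqrt (q1 ^ 2 + q2 ^ 2) := by
      rw [Complex.norm_def, Complex.normSq_mk]
      ring_nf
    refine ⟨Complex.arg z / 2, ?_, ?_⟩
    · rw [show 2 * (Complex.arg z / 2) = Complex.arg z by ring, Complex.cos_arg hz0, habs]
      field_simp [habs]
      rw [← habs]
      field_simp [norm_ne_zero_iff.mpr hz0]; rfl
    · rw [show 2 * (Complex.arg z / 2) = Complex.arg z by ring, Complex.sin_arg, habs]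
      field_simp [habs]
      rw [← habs]
      field_simp [norm_ne_zero_iff.mpr hz0]; rfl

/-- Key quadratic-form lower bound. -/
lemma qform_lower (p q q1 q2 ψ θ : ℝ) (hc : q1 = q * Real.cos (2 * ψ))
    (hs : q2 = q * Real.sin (2 * ψ)) (hpq : q ≤ p) :
    (p + q) * Real.sin (θ - (ψ + π / 2)) ^ 2 ≤
      p + q1 * Real.cos (2 * θ) + q2 * Real.sin (2 * θ) := by
  have h1 : q1 * Real.cos (2 * θ) + q2 * Real.sin (2 * θ)
      = q * Real.cos (2 * θ - 2 * ψ) := by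
    rw [hc, hs, Real.cos_sub]; ring
  have h2 : Real.sin (θ - (ψ + π / 2)) = -Real.cos (θ - ψ) := by
    rw [show θ - (ψ + π / 2) = (θ - ψ) - π / 2 by ring, Real.sin_sub_pi_div_two]
  have h3 : Real.cos (2 * θ - 2 * ψ) = 2 * Real.cos (θ - ψ) ^ 2 - 1 := by
    rw [show 2 * θ - 2 * ψ = 2 * (θ - ψ) by ring, Real.cos_two_mul]
  rw [h2, add_assoc, h1, h3]
  have h4 := Real.cos_sq_le_one (θ - ψ)
  nlinarith [h4, hpq]

lemma norm_toEuc (A : Matrix (Fin 2) (Fin 2) ℝ) (v : Fin 2 → ℝ) :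
    ‖LinearMap.toContinuousLinearMap (Matrix.toEuclideanLin A)
        ((WithLp.equiv 2 (Fin 2 → ℝ)).symm v)‖
      = Real.sqrt ((A.mulVec v 0) ^ 2 + (A.mulVec v 1) ^ 2) := by
  rw [LinearMap.coe_toContinuousLinearMap', WithLp.equiv_symm_apply, Matrix.toEuclideanLin_apply_piLp_toLp,
    EuclideanSpace.norm_eq]
  simp [Fin.sum_univ_two, sq_abs]

lemma norm_symm (v : Fin 2 → ℝ) :
    ‖(WithLp.equiv 2 (Fin 2 → ℝ)).symm v‖ = Real.sqrt ((v 0) ^ 2 + (v 1) ^ 2) := by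
  rw [EuclideanSpace.norm_eq]
  simp [Fin.sum_univ_two, sq_abs]

lemma mulVec_le_opNorm (A : Matrix (Fin 2) (Fin 2) ℝ) (v : Fin 2 → ℝ) :
    Real.sqrt ((A.mulVec v 0) ^ 2 + (A.mulVec v 1) ^ 2) ≤
      opNorm A * Real.sqrt ((v 0) ^ 2 + (v 1) ^ 2) := by
  rw [← norm_toEuc, ← norm_symm]
  exact ContinuousLinearMap.le_opNorm _ _

lemma opNorm_le_of (A : Matrix (Fin 2) (Fin 2) ℝ) (C : ℝ) (hC : 0 ≤ C)
    (h : ∀ v : Fin 2 → ℝ,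
      (A.mulVec v 0) ^ 2 + (A.mulVec v 1) ^ 2 ≤ C ^ 2 * ((v 0) ^ 2 + (v 1) ^ 2)) :
    opNorm A ≤ C := by
  apply ContinuousLinearMap.opNorm_le_bound _ hC
  intro x
  have hx : x = (WithLp.equiv 2 (Fin 2 → ℝ)).symm (WithLp.equiv 2 (Fin 2 → ℝ) x) := rfl
  rw [hx, norm_toEuc, norm_symm]
  set v : Fin 2 → ℝ := WithLp.equiv 2 (Fin 2 → ℝ) x
  calc Real.sqrt ((A.mulVec v 0) ^ 2 + (A.mulVec v 1) ^ 2)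
      ≤ Real.sqrt (C ^ 2 * ((v 0) ^ 2 + (v 1) ^ 2)) := Real.sqrt_le_sqrt (h v)
    _ = C * Real.sqrt ((v 0) ^ 2 + (v 1) ^ 2) := by
        rw [Real.sqrt_mul (by positivity), Real.sqrt_sq hC]

lemma opNorm_nonneg (A : Matrix (Fin 2) (Fin 2) ℝ) : 0 ≤ opNorm A := norm_nonneg _

lemma sqrt_cauchy (x0 x1 y0 y1 : ℝ) :
    |x0 * y1 - x1 * y0| ≤ Real.sqrt (x0 ^ 2 + x1 ^ 2) * Real.sqrt (y0 ^ 2 + y1 ^ 2) := by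
  rw [← Real.sqrt_sq_eq_abs, ← Real.sqrt_mul (by positivity)]
  apply Real.sqrt_le_sqrt
  nlinarith [sq_nonneg (x0 * y0 + x1 * y1)]

lemma g_expand (A : Matrix (Fin 2) (Fin 2) ℝ) (θ : ℝ) :
    (A.mulVec (uvec θ) 0) ^ 2 + (A.mulVec (uvec θ) 1) ^ 2 =
      (A 0 0 ^ 2 + A 0 1 ^ 2 + A 1 0 ^ 2 + A 1 1 ^ 2) / 2
      + (A 0 0 ^ 2 + A 1 0 ^ 2 - A 0 1 ^ 2 - A 1 1 ^ 2) / 2 * Real.cos (2 * θ)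
      + (A 0 0 * A 0 1 + A 1 0 * A 1 1) * Real.sin (2 * θ) := by
  have hsc := Real.sin_sq_add_cos_sq θ
  simp only [uvec, Matrix.mulVec, dotProduct, Fin.sum_univ_two, Real.cos_two_mul,
    Real.sin_two_mul, Matrix.cons_val_zero, Matrix.cons_val_one, Matrix.head_cons]
  linear_combination (A 0 1 ^ 2 + A 1 1 ^ 2) * hsc

lemma det_mulVec (A : Matrix (Fin 2) (Fin 2) ℝ) (u v : Fin 2 → ℝ) :
    (A.mulVec u 0) * (A.mulVec v 1) - (A.mulVec u 1) * (A.mulVec v 0)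
      = A.det * (u 0 * v 1 - u 1 * v 0) := by
  simp only [Matrix.mulVec, dotProduct, Fin.sum_univ_two, Matrix.det_fin_two]
  ring

end Aux

/-- For a `2 × 2` real matrix with `|det A| = 1`, there is a direction
`θ₀` such that the projective action of `A` contracts the complement of the `ε`-neighbourhood
of `θ₀` (in `ℝ mod π`) to a set of diameter at most `2π³/(‖A‖²ε²)`. -/
theorem stmt8 (A : Matrix (Fin 2) (Fin 2) ℝ) (hdet : |A.det| = 1) :
    ∃ θ₀ : ℝ, ∀ ε > (0 : ℝ), ∀ θ₁ θ₂ φ₁ φ₂ : ℝ,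
      (∃ c : ℝ, A.mulVec (uvec θ₁) = c • uvec φ₁) →
      (∃ c : ℝ, A.mulVec (uvec θ₂) = c • uvec φ₂) →
      ε ≤ dist (θ₁ : AddCircle Real.pi) (θ₀ : AddCircle Real.pi) →
      ε ≤ dist (θ₂ : AddCircle Real.pi) (θ₀ : AddCircle Real.pi) →
      dist (φ₁ : AddCircle Real.pi) (φ₂ : AddCircle Real.pi) ≤
        2 * Real.pi ^ 3 / (opNorm A ^ 2 * ε ^ 2) := by
  set p : ℝ := (A 0 0 ^ 2 + A 0 1 ^ 2 + A 1 0 ^ 2 + A 1 1 ^ 2) / 2 with hp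
  set q1 : ℝ := (A 0 0 ^ 2 + A 1 0 ^ 2 - A 0 1 ^ 2 - A 1 1 ^ 2) / 2 with hq1
  set q2 : ℝ := A 0 0 * A 0 1 + A 1 0 * A 1 1 with hq2
  set q : ℝ := Real.sqrt (q1 ^ 2 + q2 ^ 2) with hq
  have hq0 : 0 ≤ q := Real.sqrt_nonneg _
  have hqsq : q ^ 2 = q1 ^ 2 + q2 ^ 2 := Real.sq_sqrt (by positivity)
  have hp0 : 0 ≤ p := by rw [hp]; positivity
  have hdetsq : A.det ^ 2 = 1 := by
    rw [← sq_abs, hdet]; norm_num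
  have hpq : q ≤ p := by
    have hdd : p ^ 2 - q1 ^ 2 - q2 ^ 2 = A.det ^ 2 := by
      rw [hp, hq1, hq2, Matrix.det_fin_two]; ring
    have h2 : q1 ^ 2 + q2 ^ 2 ≤ p ^ 2 := by linarith [hdd, hdetsq]
    calc q = Real.sqrt (q1 ^ 2 + q2 ^ 2) := hq
      _ ≤ Real.sqrt (p ^ 2) := Real.sqrt_le_sqrt h2
      _ = p := Real.sqrt_sq hp0
  have hpq0 : 0 ≤ p + q := by linarith
  obtain ⟨ψ, hcψ, hsψ⟩ := phase_exists q1 q2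
  rw [← hq] at hcψ hsψ
  -- operator norm squared is at most p + q
  have hNle : opNorm A ≤ Real.sqrt (p + q) := by
    apply opNorm_le_of A _ (Real.sqrt_nonneg _)
    intro v
    rw [Real.sq_sqrt hpq0]
    have key : q1 * (v 0 ^ 2 - v 1 ^ 2) + 2 * q2 * (v 0 * v 1) ≤ q * (v 0 ^ 2 + v 1 ^ 2) := by
      rcases le_or_gt (q1 * (v 0 ^ 2 - v 1 ^ 2) + 2 * q2 * (v 0 * v 1)) 0 with h | h
      · exact h.trans (by positivity)
      · have hsq : (q1 * (v 0 ^ 2 - v 1 ^ 2) + 2 * q2 * (v 0 * v 1)) ^ 2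
            ≤ (q * (v 0 ^ 2 + v 1 ^ 2)) ^ 2 := by
          have hid2 : (q * (v 0 ^ 2 + v 1 ^ 2)) ^ 2
              - (q1 * (v 0 ^ 2 - v 1 ^ 2) + 2 * q2 * (v 0 * v 1)) ^ 2
              = (2 * q1 * (v 0 * v 1) - q2 * (v 0 ^ 2 - v 1 ^ 2)) ^ 2 := by
            linear_combination (v 0 ^ 2 + v 1 ^ 2) ^ 2 * hqsq
          linarith [sq_nonneg (2 * q1 * (v 0 * v 1) - q2 * (v 0 ^ 2 - v 1 ^ 2)), hid2]
        calc q1 * (v 0 ^ 2 - v 1 ^ 2) + 2 * q2 * (v 0 * v 1)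
            = Real.sqrt ((q1 * (v 0 ^ 2 - v 1 ^ 2) + 2 * q2 * (v 0 * v 1)) ^ 2) :=
              (Real.sqrt_sq h.le).symm
          _ ≤ Real.sqrt ((q * (v 0 ^ 2 + v 1 ^ 2)) ^ 2) := Real.sqrt_le_sqrt hsq
          _ = q * (v 0 ^ 2 + v 1 ^ 2) := Real.sqrt_sq (by positivity)
    simp only [Matrix.mulVec, dotProduct, Fin.sum_univ_two]
    have hexp : (A 0 0 * v 0 + A 0 1 * v 1) ^ 2 + (A 1 0 * v 0 + A 1 1 * v 1) ^ 2
        = p * (v 0 ^ 2 + v 1 ^ 2) + (q1 * (v 0 ^ 2 - v 1 ^ 2) + 2 * q2 * (v 0 * v 1)) := by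
      rw [hp, hq1, hq2]; ring
    linarith [key, hexp]
  have hNsq : opNorm A ^ 2 ≤ p + q := by
    have := pow_le_pow_left₀ (opNorm_nonneg A) hNle 2
    rwa [Real.sq_sqrt hpq0] at this
  -- operator norm is at least 1
  have hN1 : 1 ≤ opNorm A := by
    have h1 := mulVec_le_opNorm A ![1, 0]
    have h2 := mulVec_le_opNorm A ![0, 1]
    have hC := sqrt_cauchy (A.mulVec ![1, 0] 0) (A.mulVec ![1, 0] 1)
      (A.mulVec ![0, 1] 0) (A.mulVec ![0, 1] 1)
    have hdd := det_mulVec A ![1, 0] ![0, 1]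
    simp only [Matrix.cons_val_zero, Matrix.cons_val_one, Matrix.head_cons] at h1 h2 hdd
    norm_num [Real.sqrt_one] at h1 h2 hdd
    norm_num at hC
    rw [hdd] at hC
    rw [hdet] at hC
    nlinarith [opNorm_nonneg A, hC, h1, h2, Real.sqrt_nonneg
      (A 0 0 ^ 2 + A 1 0 ^ 2), Real.sqrt_nonneg
      (A 0 1 ^ 2 + A 1 1 ^ 2)]
  refine ⟨ψ + π / 2, ?_⟩
  intro ε hε θ₁ θ₂ φ₁ φ₂ h1 h2 hd1 hd2
  obtain ⟨c₁, hA1⟩ := h1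
  obtain ⟨c₂, hA2⟩ := h2
  set θ₀ : ℝ := ψ + π / 2 with hθ₀
  set N : ℝ := opNorm A with hN
  set m : ℝ := N * (2 / π) * ε with hm
  have hπ := Real.pi_pos
  have hN0 : 0 < N := lt_of_lt_of_le one_pos hN1
  have hm0 : 0 < m := by
    rw [hm]
    positivity
  -- components of the images
  have e10 : A.mulVec (uvec θ₁) 0 = c₁ * Real.cos φ₁ := by
    rw [hA1]; simp [uvec]
  have e11 : A.mulVec (uvec θ₁) 1 = c₁ * Real.sin φ₁ := by
    rw [hA1]; simp [uvec]
  have e20 : A.mulVec (uvec θ₂) 0 = c₂ * Real.cos φ₂ := by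
    rw [hA2]; simp [uvec]
  have e21 : A.mulVec (uvec θ₂) 1 = c₂ * Real.sin φ₂ := by
    rw [hA2]; simp [uvec]
  -- |cᵢ| ≥ m
  have habs : ∀ (θ φ : ℝ) (c : ℝ), A.mulVec (uvec θ) 0 = c * Real.cos φ →
      A.mulVec (uvec θ) 1 = c * Real.sin φ →
      ε ≤ dist (θ : AddCircle Real.pi) (θ₀ : AddCircle Real.pi) → m ≤ |c| := by
    intro θ φ c hc0 hc1 hdist
    have hgθ := g_expand A θ
    rw [hc0, hc1, ← hp, ← hq1, ← hq2] at hgθ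
    have hcsq : c ^ 2 = p + q1 * Real.cos (2 * θ) + q2 * Real.sin (2 * θ) := by
      have h := Real.sin_sq_add_cos_sq φ
      linear_combination hgθ - c ^ 2 * h
    have hlow := qform_lower p q q1 q2 ψ θ hcψ hsψ hpq
    rw [← hcsq] at hlow
    -- Jordan bound
    have hj := jordan_circ θ θ₀
    have hεd : 2 / π * ε ≤ |Real.sin (θ - θ₀)| := by
      refine le_trans ?_ hj
      have h2π : (0:ℝ) ≤ 2 / π := by positivity
      exact mul_le_mul_of_nonneg_left hdist h2π
    have hsin2 : (2 / π * ε) ^ 2 ≤ Real.sin (θ - θ₀) ^ 2 := by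
      have := pow_le_pow_left₀ (by positivity) hεd 2
      rwa [sq_abs] at this
    have hc2 : m ^ 2 ≤ c ^ 2 := by
      have h5 : (p + q) * (2 / π * ε) ^ 2 ≤ (p + q) * Real.sin (θ - θ₀) ^ 2 :=
        mul_le_mul_of_nonneg_left hsin2 hpq0
      have h6 : N ^ 2 * (2 / π * ε) ^ 2 ≤ (p + q) * (2 / π * ε) ^ 2 :=
        mul_le_mul_of_nonneg_right hNsq (by positivity)
      have h7 : m ^ 2 = N ^ 2 * (2 / π * ε) ^ 2 := by rw [hm]; ring
      rw [← hθ₀] at hlow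
      linarith [h5, h6, hlow, h7]
    calc m = Real.sqrt (m ^ 2) := (Real.sqrt_sq hm0.le).symm
      _ ≤ Real.sqrt (c ^ 2) := Real.sqrt_le_sqrt hc2
      _ = |c| := Real.sqrt_sq_eq_abs c
  have hm1 : m ≤ |c₁| := habs θ₁ φ₁ c₁ e10 e11 hd1
  have hm2 : m ≤ |c₂| := habs θ₂ φ₂ c₂ e20 e21 hd2
  -- sine identity from the determinant
  have hid := det_mulVec A (uvec θ₁) (uvec θ₂)
  rw [e10, e11, e20, e21] at hid
  simp only [uvec, Matrix.cons_val_zero, Matrix.cons_val_one, Matrix.head_cons] at hid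
  have hsid : c₁ * c₂ * Real.sin (φ₂ - φ₁) = A.det * Real.sin (θ₂ - θ₁) := by
    rw [Real.sin_sub, Real.sin_sub]
    linear_combination hid
  have habs1 : |c₁| * |c₂| * |Real.sin (φ₂ - φ₁)| ≤ 1 := by
    have : |c₁ * c₂ * Real.sin (φ₂ - φ₁)| = |A.det| * |Real.sin (θ₂ - θ₁)| := by
      rw [hsid, abs_mul]
    rw [abs_mul, abs_mul] at this
    rw [this, hdet, one_mul]
    exact Real.abs_sin_le_one _
  -- final computation
  set s : ℝ := |Real.sin (φ₂ - φ₁)| with hsdef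
  have hs0 : 0 ≤ s := abs_nonneg _
  have hjf : 2 / π * dist (φ₁ : AddCircle Real.pi) (φ₂ : AddCircle Real.pi) ≤ s := by
    have := jordan_circ φ₁ φ₂
    rwa [show φ₁ - φ₂ = -(φ₂ - φ₁) by ring, Real.sin_neg, abs_neg] at this
  have hmm : m * m ≤ |c₁| * |c₂| := mul_le_mul hm1 hm2 hm0.le (abs_nonneg c₁)
  have hsm : s * (m * m) ≤ 1 := by
    have h := mul_le_mul_of_nonneg_left hmm hs0
    have h2 : s * (|c₁| * |c₂|) = |c₁| * |c₂| * s := by ring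
    linarith [h, habs1, h2.le, h2.ge]
  have hD : dist (φ₁ : AddCircle Real.pi) (φ₂ : AddCircle Real.pi) ≤ π / 2 * s := by
    have h := mul_le_mul_of_nonneg_left hjf (by positivity : (0:ℝ) ≤ π / 2)
    rwa [show π / 2 * (2 / π * dist (φ₁ : AddCircle Real.pi) (φ₂ : AddCircle Real.pi))
        = dist (φ₁ : AddCircle Real.pi) (φ₂ : AddCircle Real.pi) by field_simp] at h
  have hNE : N ^ 2 * ε ^ 2 = π ^ 2 * m ^ 2 / 4 := by
    rw [hm]; field_simp; ring
  rw [hNE, le_div_iff₀ (by positivity)]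
  have hX : (0:ℝ) ≤ π ^ 2 * m ^ 2 / 4 := by positivity
  have hst1 := mul_le_mul_of_nonneg_right hD hX
  have hst2 := mul_le_mul_of_nonneg_left hsm (by positivity : (0:ℝ) ≤ π ^ 3 / 8)
  have hr : π / 2 * s * (π ^ 2 * m ^ 2 / 4) = π ^ 3 / 8 * (s * (m * m)) := by ring
  linarith [hst1, hst2, pow_pos hπ 3, hr.le, hr.ge]
end

section
/- Let A be an invertible 2×2 real matrix, and let h₀ = e^{iθ₀} be a unit vector attaining the minimum of ‖Ah‖ over all unit vectors h ∈ ℝ². Then for every ε > 0 and every unit vector h = e^{iθ} with dist(θ, θ₀) ≥ ε in ℝ mod π, one has ‖Ah‖ ≥ ‖A‖ε/(2π), where ‖A‖ is the operator norm of A. -/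
open MeasureTheory Filter
open scoped ENNReal

open Real in
lemma uvec_decomp (θ₀ φ : ℝ) :
    uvec (θ₀ + φ) = Real.cos φ • uvec θ₀ + Real.sin φ • uvec (θ₀ + π / 2) := by
  funext i
  fin_cases i <;>
    simp [uvec, Real.cos_add, Real.sin_add] <;> ring

open Real in
lemma vec_decomp (θ₀ : ℝ) (x : Fin 2 → ℝ) :
    x = (x 0 * cos θ₀ + x 1 * sin θ₀) • uvec θ₀
      + (-(x 0) * sin θ₀ + x 1 * cos θ₀) • uvec (θ₀ + π / 2) := by
  funext i
  fin_cases i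
  · simp [uvec, Real.cos_add, Real.sin_add]
    linear_combination (-(x 0)) * Real.sin_sq_add_cos_sq θ₀
  · simp [uvec, Real.cos_add, Real.sin_add]
    linear_combination (-(x 1)) * Real.sin_sq_add_cos_sq θ₀

lemma enorm2_sq (w : Fin 2 → ℝ) : enorm2 w ^ 2 = w 0 ^ 2 + w 1 ^ 2 :=
  Real.sq_sqrt (by positivity)

lemma enorm2_nonneg (w : Fin 2 → ℝ) : 0 ≤ enorm2 w := Real.sqrt_nonneg _

lemma enorm2_uvec (ψ : ℝ) : enorm2 (uvec ψ) = 1 := by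
  have h : enorm2 (uvec ψ) = Real.sqrt (Real.cos ψ ^ 2 + Real.sin ψ ^ 2) := by
    simp [enorm2, uvec]
  rw [h, Real.cos_sq_add_sin_sq, Real.sqrt_one]

lemma opNorm_le_sqrt (M : Matrix (Fin 2) (Fin 2) ℝ) (θ₀ : ℝ) {a b : ℝ}
    (ha : a = (M.mulVec (uvec θ₀)) 0 ^ 2 + (M.mulVec (uvec θ₀)) 1 ^ 2)
    (hbdef : b = (M.mulVec (uvec (θ₀ + Real.pi / 2))) 0 ^ 2
      + (M.mulVec (uvec (θ₀ + Real.pi / 2))) 1 ^ 2)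
    (ht : (M.mulVec (uvec θ₀)) 0 * (M.mulVec (uvec (θ₀ + Real.pi / 2))) 0
      + (M.mulVec (uvec θ₀)) 1 * (M.mulVec (uvec (θ₀ + Real.pi / 2))) 1 = 0)
    (hab : a ≤ b) :
    opNorm M ≤ Real.sqrt b := by
  have hb0 : 0 ≤ b := by rw [hbdef]; positivity
  rw [opNorm]
  apply ContinuousLinearMap.opNorm_le_bound _ (Real.sqrt_nonneg b)
  intro x
  set u : Fin 2 → ℝ := M.mulVec (uvec θ₀) with hu
  set v : Fin 2 → ℝ := M.mulVec (uvec (θ₀ + Real.pi / 2)) with hv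
  set x' : Fin 2 → ℝ := (WithLp.equiv 2 (Fin 2 → ℝ)) x with hx'
  set p : ℝ := x' 0 * Real.cos θ₀ + x' 1 * Real.sin θ₀ with hp
  set q : ℝ := -(x' 0) * Real.sin θ₀ + x' 1 * Real.cos θ₀ with hq
  have hmv : M.mulVec x' = p • u + q • v := by
    conv_lhs => rw [vec_decomp θ₀ x']
    rw [Matrix.mulVec_add, Matrix.mulVec_smul, Matrix.mulVec_smul]
  have hnormx : ‖x‖ ^ 2 = x' 0 ^ 2 + x' 1 ^ 2 := by
    rw [EuclideanSpace.norm_eq, Real.sq_sqrt (by positivity)]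
    simp [Fin.sum_univ_two, hx', sq_abs]
  have hTx : ‖(LinearMap.toContinuousLinearMap (Matrix.toEuclideanLin M)) x‖ ^ 2
      = (M.mulVec x') 0 ^ 2 + (M.mulVec x') 1 ^ 2 := by
    rw [LinearMap.coe_toContinuousLinearMap', Matrix.toEuclideanLin_apply,
      EuclideanSpace.norm_eq, Real.sq_sqrt (by positivity)]
    simp [Fin.sum_univ_two, sq_abs, hx']
  have hpq : p ^ 2 + q ^ 2 = x' 0 ^ 2 + x' 1 ^ 2 := by
    rw [hp, hq]
    linear_combination (x' 0 ^ 2 + x' 1 ^ 2) * Real.sin_sq_add_cos_sq θ₀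
  have hbound : ‖(LinearMap.toContinuousLinearMap (Matrix.toEuclideanLin M)) x‖ ^ 2
      ≤ b * ‖x‖ ^ 2 := by
    have hab' : u 0 ^ 2 + u 1 ^ 2 ≤ v 0 ^ 2 + v 1 ^ 2 := by
      rw [← ha, ← hbdef]; exact hab
    have ht2 : p * q * (u 0 * v 0 + u 1 * v 1) = 0 := by rw [ht]; ring
    rw [hTx, hmv, hnormx, ← hpq, hbdef]
    simp only [Pi.add_apply, Pi.smul_apply, smul_eq_mul]
    nlinarith [ht2, mul_nonneg (sq_nonneg p) (sub_nonneg.2 hab')]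
  calc ‖(LinearMap.toContinuousLinearMap (Matrix.toEuclideanLin M)) x‖
      = Real.sqrt (‖(LinearMap.toContinuousLinearMap (Matrix.toEuclideanLin M)) x‖ ^ 2) :=
        (Real.sqrt_sq (norm_nonneg _)).symm
    _ ≤ Real.sqrt (b * ‖x‖ ^ 2) := Real.sqrt_le_sqrt hbound
    _ = Real.sqrt b * ‖x‖ := by
        rw [Real.sqrt_mul hb0, Real.sqrt_sq (norm_nonneg _)]

set_option maxHeartbeats 1600000 in
/-- If `h₀ = e^{iθ₀}` minimizes `‖Ah‖` over unit vectors, then every unit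
vector whose angle is at least `ε` away from `θ₀` (in `ℝ mod π`) satisfies
`‖Ah‖ ≥ ‖A‖ε/(2π)`. -/
theorem stmt10 (A : GL (Fin 2) ℝ) (θ₀ : ℝ)
    (hmin : ∀ h : Fin 2 → ℝ, enorm2 h = 1 →
      enorm2 ((A : Matrix (Fin 2) (Fin 2) ℝ).mulVec (uvec θ₀)) ≤
        enorm2 ((A : Matrix (Fin 2) (Fin 2) ℝ).mulVec h)) :
    ∀ ε > (0 : ℝ), ∀ θ : ℝ,
      ε ≤ dist (θ : AddCircle Real.pi) (θ₀ : AddCircle Real.pi) →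
      opNorm (A : Matrix (Fin 2) (Fin 2) ℝ) * ε / (2 * Real.pi) ≤
        enorm2 ((A : Matrix (Fin 2) (Fin 2) ℝ).mulVec (uvec θ)) := by
  set B := (A : Matrix (Fin 2) (Fin 2) ℝ) with hB
  set u : Fin 2 → ℝ := B.mulVec (uvec θ₀) with hu
  set v : Fin 2 → ℝ := B.mulVec (uvec (θ₀ + Real.pi / 2)) with hv
  obtain ⟨a, ha⟩ : ∃ a : ℝ, a = u 0 ^ 2 + u 1 ^ 2 := ⟨_, rfl⟩
  obtain ⟨b, hbdef⟩ : ∃ b : ℝ, b = v 0 ^ 2 + v 1 ^ 2 := ⟨_, rfl⟩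
  obtain ⟨t, htdef⟩ : ∃ t : ℝ, t = u 0 * v 0 + u 1 * v 1 := ⟨_, rfl⟩
  have hdecomp : ∀ φ : ℝ, B.mulVec (uvec (θ₀ + φ))
      = Real.cos φ • u + Real.sin φ • v := by
    intro φ
    rw [uvec_decomp, Matrix.mulVec_add, Matrix.mulVec_smul, Matrix.mulVec_smul]
  have key : ∀ φ : ℝ,
      0 ≤ Real.sin φ ^ 2 * (b - a) + 2 * Real.cos φ * Real.sin φ * t := by
    intro φ
    have h1 := hmin (uvec (θ₀ + φ)) (enorm2_uvec _)
    have h2 : enorm2 u ^ 2 ≤ enorm2 (B.mulVec (uvec (θ₀ + φ))) ^ 2 :=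
      pow_le_pow_left₀ (enorm2_nonneg _) h1 2
    rw [hdecomp φ, enorm2_sq, enorm2_sq] at h2
    simp only [Pi.add_apply, Pi.smul_apply, smul_eq_mul] at h2
    have hexp : (Real.cos φ * u 0 + Real.sin φ * v 0) ^ 2
        + (Real.cos φ * u 1 + Real.sin φ * v 1) ^ 2
        = (u 0 ^ 2 + u 1 ^ 2)
          + (Real.sin φ ^ 2 * (b - a) + 2 * Real.cos φ * Real.sin φ * t) := by
      rw [ha, hbdef, htdef]
      linear_combination (u 0 ^ 2 + u 1 ^ 2) * Real.sin_sq_add_cos_sq φ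
    rw [hexp] at h2
    linarith
  have hab : a ≤ b := by
    have h := key (Real.pi / 2)
    rw [Real.sin_pi_div_two, Real.cos_pi_div_two] at h
    norm_num at h
    linarith
  have ht : t = 0 := by
    by_contra ht
    have habs : 0 < |t| := abs_pos.2 ht
    set D : ℝ := 2 * (b - a) + 2 * |t| + 2 with hD
    have hD0 : 0 < D := by rw [hD]; nlinarith
    set s : ℝ := |t| / D with hs
    have hs0 : 0 < s := div_pos habs hD0
    have hsD : s * D = |t| := div_mul_cancel₀ _ (ne_of_gt hD0)
    have hshalf : s ≤ 1 / 2 := by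
      rw [hs, div_le_iff₀ hD0]; rw [hD]; nlinarith
    set σ : ℝ := if 0 < t then (-1 : ℝ) else 1 with hσ
    have hσcases : σ = 1 ∨ σ = -1 := by
      rw [hσ]; by_cases h : 0 < t
      · right; simp [h]
      · left; simp [h]
    have hσs1 : -1 ≤ σ * s := by rcases hσcases with h | h <;> rw [h] <;> nlinarith
    have hσs2 : σ * s ≤ 1 := by rcases hσcases with h | h <;> rw [h] <;> nlinarith
    have hsin : Real.sin (Real.arcsin (σ * s)) = σ * s := Real.sin_arcsin hσs1 hσs2
    have hcos : Real.cos (Real.arcsin (σ * s)) = Real.sqrt (1 - s ^ 2) := by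
      rw [Real.cos_arcsin]; congr 1
      rcases hσcases with h | h <;> rw [h] <;> ring
    have hcg : (1 : ℝ) / 2 ≤ Real.sqrt (1 - s ^ 2) := by
      have h34 : (1 : ℝ) / 4 ≤ 1 - s ^ 2 := by nlinarith
      nlinarith [Real.sq_sqrt (by nlinarith : (0:ℝ) ≤ 1 - s ^ 2),
        Real.sqrt_nonneg (1 - s ^ 2)]
    have hst : σ * s * t = -(s * |t|) := by
      rw [hσ]; by_cases h : 0 < t
      · rw [if_pos h, abs_of_pos h]; ring
      · rw [if_neg h, abs_of_nonpos (not_lt.1 h)]; ring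
    clear_value σ s D
    have hkey := key (Real.arcsin (σ * s))
    rw [hsin, hcos] at hkey
    have hs2 : (σ * s) ^ 2 = s ^ 2 := by
      rcases hσcases with h | h <;> rw [h] <;> ring
    have h1 : 0 ≤ s ^ 2 * (b - a) - 2 * Real.sqrt (1 - s ^ 2) * (s * |t|) := by
      have : Real.sin (Real.arcsin (σ * s)) = σ * s := hsin
      calc (0:ℝ) ≤ (σ * s) ^ 2 * (b - a)
            + 2 * Real.sqrt (1 - s ^ 2) * (σ * s) * t := hkey
        _ = s ^ 2 * (b - a) - 2 * Real.sqrt (1 - s ^ 2) * (s * |t|) := by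
            rw [hs2]
            have h2 : 2 * Real.sqrt (1 - s ^ 2) * (σ * s) * t
                = 2 * Real.sqrt (1 - s ^ 2) * (σ * s * t) := by ring
            rw [h2, hst]; ring
    have e1 : s * |t| ≤ 2 * Real.sqrt (1 - s ^ 2) * (s * |t|) := by
      nlinarith [mul_nonneg hs0.le (abs_nonneg t)]
    have e2 : s * |t| ≤ s ^ 2 * (b - a) := by linarith
    have e3 : s * |t| = s ^ 2 * (2 * (b - a) + 2 * |t| + 2) := by
      rw [← hD, ← hsD]; ring
    nlinarith [mul_pos (mul_pos hs0 hs0) habs, mul_pos hs0 hs0,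
      mul_nonneg (mul_nonneg hs0.le hs0.le) (sub_nonneg.2 hab)]
  have hb0 : 0 ≤ b := by rw [hbdef]; positivity
  have hop : opNorm B ≤ Real.sqrt b := opNorm_le_sqrt B θ₀ ha hbdef (by rw [← htdef]; exact ht) hab
  -- main conclusion
  intro ε hε θ hdist
  have hπ : (0:ℝ) < Real.pi := Real.pi_pos
  set φ : ℝ := θ - θ₀ with hφ
  have hθeq : θ = θ₀ + φ := by rw [hφ]; ring
  have hd : dist (θ : AddCircle Real.pi) (θ₀ : AddCircle Real.pi)
      = |φ - round (Real.pi⁻¹ * φ) * Real.pi| := by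
    rw [dist_eq_norm]
    have h : (θ : AddCircle Real.pi) - (θ₀ : AddCircle Real.pi)
        = ((φ : ℝ) : AddCircle Real.pi) := by
      rw [hφ, AddCircle.coe_sub]
    rw [h, AddCircle.norm_eq]
  set n : ℤ := round (Real.pi⁻¹ * φ) with hn
  set ψ : ℝ := φ - n * Real.pi with hψ
  have hψle : |ψ| ≤ Real.pi / 2 := by
    have h1 : |Real.pi⁻¹ * φ - n| ≤ 1 / 2 := abs_sub_round _
    have h2 : ψ = Real.pi * (Real.pi⁻¹ * φ - n) := by
      rw [hψ, mul_sub, ← mul_assoc, mul_inv_cancel₀ hπ.ne', one_mul]; ring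
    rw [h2, abs_mul, abs_of_pos hπ]
    nlinarith
  have hεd : ε ≤ |ψ| := by rw [hψ, ← hd]; exact hdist
  have hsinper : |Real.sin φ| = |Real.sin ψ| := by
    have h : φ = ψ + n * Real.pi := by rw [hψ]; ring
    rw [h, Real.sin_add_int_mul_pi, abs_mul]
    have h2 : |((-1 : ℝ)) ^ n| = 1 := by
      rcases Int.even_or_odd n with he | ho
      · rw [he.neg_one_zpow]; norm_num
      · rw [ho.neg_one_zpow]; norm_num
    rw [h2, one_mul]
  have habs_sin : |Real.sin ψ| = Real.sin |ψ| := by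
    rcases le_or_gt 0 ψ with h | h
    · rw [abs_of_nonneg h, abs_of_nonneg]
      exact Real.sin_nonneg_of_nonneg_of_le_pi h
        (by nlinarith [hψle, abs_of_nonneg h])
    · rw [abs_of_neg h, Real.sin_neg, abs_of_nonpos]
      apply Real.sin_nonpos_of_nonpos_of_neg_pi_le (le_of_lt h)
      nlinarith [hψle, abs_of_neg h]
  have hsinlb : 2 / Real.pi * ε ≤ |Real.sin φ| := by
    rw [hsinper, habs_sin]
    calc 2 / Real.pi * ε ≤ 2 / Real.pi * |ψ| := by
          apply mul_le_mul_of_nonneg_left hεd; positivity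
      _ ≤ Real.sin |ψ| := Real.mul_le_sin (abs_nonneg _) hψle
  have hsin2 : ε / (2 * Real.pi) ≤ |Real.sin φ| := by
    refine le_trans ?_ hsinlb
    rw [div_le_iff₀ (by positivity)]
    have h4 : 2 / Real.pi * ε * (2 * Real.pi) = 4 * ε := by field_simp; ring
    rw [h4]; linarith
  have henorm : Real.sqrt b * |Real.sin φ| ≤ enorm2 (B.mulVec (uvec θ)) := by
    rw [hθeq, hdecomp φ]
    have hval : enorm2 (Real.cos φ • u + Real.sin φ • v)
        = Real.sqrt (Real.cos φ ^ 2 * a + Real.sin φ ^ 2 * b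
            + 2 * Real.cos φ * Real.sin φ * t) := by
      rw [enorm2]
      congr 1
      simp only [Pi.add_apply, Pi.smul_apply, smul_eq_mul]
      rw [ha, hbdef, htdef]; ring
    rw [hval, ht]
    have h1 : Real.sin φ ^ 2 * b ≤ Real.cos φ ^ 2 * a + Real.sin φ ^ 2 * b
        + 2 * Real.cos φ * Real.sin φ * 0 := by
      have ha0 : 0 ≤ a := by rw [ha]; positivity
      nlinarith [sq_nonneg (Real.cos φ)]
    have h2 : Real.sqrt (Real.sin φ ^ 2 * b) = Real.sqrt b * |Real.sin φ| := by
      rw [Real.sqrt_mul (sq_nonneg _), Real.sqrt_sq_eq_abs, mul_comm]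
    rw [← h2]
    exact Real.sqrt_le_sqrt h1
  calc opNorm B * ε / (2 * Real.pi) = opNorm B * (ε / (2 * Real.pi)) := by ring
    _ ≤ Real.sqrt b * |Real.sin φ| := by
        apply mul_le_mul hop hsin2 (by positivity) (Real.sqrt_nonneg b)
    _ ≤ enorm2 (B.mulVec (uvec θ)) := henorm
end
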